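/- Let G(x) = A_0 + x_1 A_1 + ... + x_n A_n with A_0,...,A_n q×q symmetric real matrices, and K = {x ∈ ℝ^n : G(x) ⪰ 0}. If K is compact with nonempty interior, then for each i ∈ {1,...,n} there exists a q×q symmetric real matrix U_i such that x_i = ⟨U_i, G(x)⟩ identically as polynomials in x. -/

import Mathlib

open scoped BigOperators

noncomputable section

open Matrix in
/-- placeholder to enable transpose notation -/
example : True := trivial

open Matrix

/-- Trace inner product `⟨A, B⟩ = tr(Aᵀ B) = ∑ᵢⱼ Aᵢⱼ Bᵢⱼ` of two real matrices. -/
def tipR {ι : Type*} [Fintype ι] (A B : Matrix ι ι ℝ) : ℝ :=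
  ∑ i, ∑ j, A i j * B i j

section tipRlemmas

variable {ι : Type*} [Fintype ι]

lemma tipR_add_left (U V M : Matrix ι ι ℝ) : tipR (U + V) M = tipR U M + tipR V M := by
  simp [tipR, add_mul, Finset.sum_add_distrib]

lemma tipR_smul_left (a : ℝ) (U M : Matrix ι ι ℝ) : tipR (a • U) M = a * tipR U M := by
  simp [tipR, Finset.mul_sum, mul_assoc]

lemma tipR_add_right (U M N : Matrix ι ι ℝ) : tipR U (M + N) = tipR U M + tipR U N := by
  simp [tipR, mul_add, Finset.sum_add_distrib]

lemma tipR_smul_right (a : ℝ) (U M : Matrix ι ι ℝ) : tipR U (a • M) = a * tipR U M := by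
  simp [tipR, Finset.mul_sum, mul_left_comm]

lemma tipR_zero_right (U : Matrix ι ι ℝ) : tipR U 0 = 0 := by simp [tipR]

lemma tipR_sum_right {κ : Type*} (U : Matrix ι ι ℝ) (s : Finset κ) (f : κ → Matrix ι ι ℝ) :
    tipR U (∑ l ∈ s, f l) = ∑ l ∈ s, tipR U (f l) := by
  classical
  induction s using Finset.induction with
  | empty => simp [tipR_zero_right]
  | insert _ _ h ih => simp [Finset.sum_insert h, tipR_add_right, ih]

lemma tipR_self_eq_zero {M : Matrix ι ι ℝ} (h : tipR M M = 0) : M = 0 := by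
  ext i j
  have hnn : ∀ i, 0 ≤ ∑ j, M i j * M i j := fun i =>
    Finset.sum_nonneg fun j _ => mul_self_nonneg _
  have h1 : ∑ j, M i j * M i j = 0 := by
    have := (Finset.sum_eq_zero_iff_of_nonneg (fun i _ => hnn i)).mp h
    exact this i (Finset.mem_univ i)
  have h2 : M i j * M i j = 0 :=
    (Finset.sum_eq_zero_iff_of_nonneg (fun j _ => mul_self_nonneg _)).mp h1 j (Finset.mem_univ j)
  have := mul_self_eq_zero.mp h2
  simpa using this

lemma tipR_transpose_left [DecidableEq ι] (U M : Matrix ι ι ℝ) : tipR Uᵀ M = tipR U Mᵀ := by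
  rw [tipR, Finset.sum_comm]
  simp [tipR, Matrix.transpose_apply]

end tipRlemmas

lemma posSemidef_smul {q : ℕ} {M : Matrix (Fin q) (Fin q) ℝ} (hM : M.PosSemidef) {t : ℝ}
    (ht : 0 ≤ t) : (t • M).PosSemidef := by
  refine ⟨?_, fun x => ?_⟩
  · have h1 := hM.1
    unfold Matrix.IsHermitian at h1 ⊢
    rw [Matrix.conjTranspose_smul, star_trivial, h1]
  · exact (hM.smul ht).2 x

/-- Key geometric lemma: if `K` is compact with nonempty interior and
`c • A0 + ∑ v l • A l = 0`, then `v i = 0`. -/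
lemma key_lemma {n q : ℕ}
    (A0 : Matrix (Fin q) (Fin q) ℝ) (A : Fin n → Matrix (Fin q) (Fin q) ℝ)
    (K : Set (Fin n → ℝ))
    (hK : K = {x | (A0 + ∑ l, x l • A l).PosSemidef})
    (hcomp : IsCompact K)
    (hint : (interior K).Nonempty)
    (i : Fin n) (c : ℝ) (v : Fin n → ℝ)
    (h : c • A0 + ∑ l, v l • A l = 0) : v i = 0 := by
  classical
  by_contra hvi
  obtain ⟨x0, hx0int⟩ := hint
  obtain ⟨r, hr, hball⟩ := Metric.mem_nhds_iff.mp (mem_interior_iff_mem_nhds.mp hx0int)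
  have hx0K : x0 ∈ K := interior_subset hx0int
  obtain ⟨R, hR⟩ := (hcomp.isBounded).exists_norm_le
  have hx0R : ‖x0‖ ≤ R := hR x0 hx0K
  have hR0 : 0 ≤ R := le_trans (norm_nonneg x0) hx0R
  by_cases hc : c = 0
  · -- translation invariance along v
    have hsum : ∑ l, v l • A l = 0 := by simpa [hc] using h
    have hmem : ∀ t : ℝ, x0 + t • v ∈ K := by
      intro t
      have hx0' : (A0 + ∑ l, x0 l • A l).PosSemidef := by rwa [hK] at hx0K
      have heq : A0 + ∑ l, (x0 + t • v) l • A l = A0 + ∑ l, x0 l • A l := by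
        simp only [Pi.add_apply, Pi.smul_apply, smul_eq_mul]
        have : ∑ l, (x0 l + t * v l) • A l
            = ∑ l, x0 l • A l + t • ∑ l, v l • A l := by
          rw [Finset.smul_sum, ← Finset.sum_add_distrib]
          exact Finset.sum_congr rfl fun l _ => by module
        rw [this, hsum, smul_zero, add_zero]
      rw [hK]
      exact Set.mem_setOf_eq ▸ (heq ▸ hx0')
    have hv : 0 < ‖v‖ := by
      refine norm_pos_iff.mpr ?_
      intro hv0; exact hvi (by simp [hv0])
    have hnum : 0 ≤ R + ‖x0‖ + 1 := by linarith [norm_nonneg x0]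
    set t : ℝ := (R + ‖x0‖ + 1) / ‖v‖ with ht
    have hle : ‖x0 + t • v‖ ≤ R := hR _ (hmem t)
    have hlow : ‖t • v‖ - ‖x0‖ ≤ ‖x0 + t • v‖ := by
      have := norm_sub_norm_le (t • v) (-x0)
      simpa [sub_neg_eq_add, add_comm] using this
    have htv : ‖t • v‖ = R + ‖x0‖ + 1 := by
      rw [norm_smul, Real.norm_eq_abs, ht, abs_div, abs_of_nonneg hnum,
        abs_of_pos hv, div_mul_cancel₀ _ (ne_of_gt hv)]
    rw [htv] at hlow
    linarith
  · -- G is linear in the shifted variable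
    set w : Fin n → ℝ := (-c⁻¹) • v with hwdef
    have hw : ∑ l, w l • A l = A0 := by
      have h1 : ∑ l, v l • A l = -(c • A0) := by
        rw [eq_neg_iff_add_eq_zero, add_comm]; exact h
      have h2 : ∑ l, w l • A l = (-c⁻¹) • ∑ l, v l • A l := by
        rw [Finset.smul_sum]
        exact Finset.sum_congr rfl fun l _ => by simp [hwdef, smul_smul]
      rw [h2, h1]
      simp [smul_smul, inv_mul_cancel₀ hc]
    have hmem : ∀ x ∈ K, ∀ t : ℝ, 0 ≤ t → t • (x + w) - w ∈ K := by
      intro x hx t ht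
      have hxP : (A0 + ∑ l, x l • A l).PosSemidef := by rwa [hK] at hx
      have heq : A0 + ∑ l, (t • (x + w) - w) l • A l
          = t • (A0 + ∑ l, x l • A l) := by
        simp only [Pi.sub_apply, Pi.smul_apply, Pi.add_apply, smul_eq_mul]
        have expand : ∑ l, (t * (x l + w l) - w l) • A l
            = t • (∑ l, x l • A l) + t • (∑ l, w l • A l) - ∑ l, w l • A l := by
          rw [Finset.smul_sum, Finset.smul_sum, ← Finset.sum_add_distrib,
            ← Finset.sum_sub_distrib]
          exact Finset.sum_congr rfl fun l _ => by module
        rw [expand, hw]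
        module
      rw [hK]
      show (A0 + ∑ l, (t • (x + w) - w) l • A l).PosSemidef
      rw [heq]
      exact posSemidef_smul hxP ht
    -- find a point x' ∈ K with x' + w ≠ 0
    have hexists : ∃ x' ∈ K, x' + w ≠ 0 := by
      by_cases h0 : x0 + w = 0
      · set d : Fin n → ℝ := (r / 2) • (Pi.single i (1 : ℝ) : Fin n → ℝ) with hd
        have hdnorm : ‖d‖ = r / 2 := by
          rw [hd, norm_smul, Real.norm_eq_abs, abs_of_nonneg (by linarith), Pi.norm_single]
          simp
        refine ⟨x0 + d, hball ?_, ?_⟩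
        · rw [Metric.mem_ball, dist_eq_norm, add_sub_cancel_left, hdnorm]
          linarith
        · rw [add_right_comm, h0, zero_add]
          intro hcontra
          have h2 : d i = 0 := by rw [hcontra]; rfl
          rw [hd] at h2
          simp only [Pi.smul_apply, Pi.single_eq_same, smul_eq_mul, mul_one] at h2
          linarith
      · exact ⟨x0, hx0K, h0⟩
    obtain ⟨x', hx'K, hx'w⟩ := hexists
    have hxw : 0 < ‖x' + w‖ := norm_pos_iff.mpr hx'w
    have hnum : 0 ≤ R + ‖w‖ + 1 := by linarith [norm_nonneg w]
    set t : ℝ := (R + ‖w‖ + 1) / ‖x' + w‖ with ht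
    have htnn : 0 ≤ t := div_nonneg hnum (le_of_lt hxw)
    have hle : ‖t • (x' + w) - w‖ ≤ R := hR _ (hmem x' hx'K t htnn)
    have hlow : ‖t • (x' + w)‖ - ‖w‖ ≤ ‖t • (x' + w) - w‖ := norm_sub_norm_le _ _
    have htv : ‖t • (x' + w)‖ = R + ‖w‖ + 1 := by
      rw [norm_smul, Real.norm_eq_abs, ht, abs_div, abs_of_nonneg hnum,
        abs_of_pos hxw, div_mul_cancel₀ _ (ne_of_gt hxw)]
    rw [htv] at hlow
    linarith

/-- If `K = {x : G(x) := A₀ + ∑ xₗ Aₗ ⪰ 0}` is compact with nonempty interior, then for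
each coordinate `i` there is a symmetric matrix `Uᵢ` with `xᵢ = ⟨Uᵢ, G(x)⟩`
identically in `x`. -/
theorem coordinate_representation {n q : ℕ}
    (A0 : Matrix (Fin q) (Fin q) ℝ) (A : Fin n → Matrix (Fin q) (Fin q) ℝ)
    (hA0 : A0.IsSymm) (hA : ∀ l, (A l).IsSymm)
    (K : Set (Fin n → ℝ))
    (hK : K = {x | (A0 + ∑ l, x l • A l).PosSemidef})
    (hcomp : IsCompact K)
    (hint : (interior K).Nonempty) :
    ∀ i : Fin n, ∃ U : Matrix (Fin q) (Fin q) ℝ, U.IsSymm ∧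
      ∀ x : Fin n → ℝ, x i = tipR U (A0 + ∑ l, x l • A l) := by
  classical
  intro i
  -- the family of matrices indexed by Fin (n+1)
  set B : Fin (n + 1) → Matrix (Fin q) (Fin q) ℝ := Fin.cons A0 A with hB
  -- the linear map U ↦ (tipR U (B j))_j
  set T : Matrix (Fin q) (Fin q) ℝ →ₗ[ℝ] EuclideanSpace ℝ (Fin (n + 1)) :=
    { toFun := fun U => (WithLp.toLp 2 (fun j => tipR U (B j)) : EuclideanSpace ℝ (Fin (n + 1)))
      map_add' := fun U V => by
        ext j
        exact tipR_add_left U V (B j)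
      map_smul' := fun a U => by
        ext j
        exact tipR_smul_left a U (B j) } with hT
  set b : EuclideanSpace ℝ (Fin (n + 1)) := EuclideanSpace.single i.succ (1 : ℝ) with hb
  -- b is in the double orthogonal complement of range T
  have hbmem : b ∈ LinearMap.range T := by
    rw [← Submodule.orthogonal_orthogonal (LinearMap.range T)]
    rw [Submodule.mem_orthogonal]
    intro y hy
    rw [Submodule.mem_orthogonal] at hy
    -- the matrix determined by y
    set M : Matrix (Fin q) (Fin q) ℝ := y 0 • A0 + ∑ l, y l.succ • A l with hM
    have hTy : ∀ U : Matrix (Fin q) (Fin q) ℝ, tipR U M = 0 := by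
      intro U
      have h1 : inner ℝ (T U) y = (0 : ℝ) := hy (T U) ⟨U, rfl⟩
      have h2 : (inner ℝ (T U) y : ℝ) = ∑ j, tipR U (B j) * y j := by
        rw [PiLp.inner_apply]
        refine Finset.sum_congr rfl fun j _ => ?_
        rw [RCLike.inner_apply', starRingEnd_apply, star_trivial]
        rfl
      have h3 : ∑ j, tipR U (B j) * y j = tipR U M := by
        have step : ∑ j, tipR U (B j) * y j = ∑ j, tipR U (y j • B j) := by
          refine Finset.sum_congr rfl fun j _ => ?_
          rw [tipR_smul_right, mul_comm]
        rw [step, ← tipR_sum_right, hM]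
        congr 1
        rw [Fin.sum_univ_succ]
        simp [hB]
      rw [← h3, ← h2, h1]
    have hM0 : M = 0 := tipR_self_eq_zero (hTy M)
    have hv0 : y i.succ = 0 := by
      refine key_lemma A0 A K hK hcomp hint i (y 0) (fun l => y l.succ) ?_
      show y 0 • A0 + ∑ l, y l.succ • A l = 0
      rw [← hM]; exact hM0
    -- inner product of y with b vanishes
    rw [real_inner_comm, hb, EuclideanSpace.inner_single_left]
    simp [hv0]
  obtain ⟨U0, hU0⟩ := hbmem
  -- symmetrize
  set U : Matrix (Fin q) (Fin q) ℝ := (2⁻¹ : ℝ) • (U0 + U0ᵀ) with hU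
  have hUsymm : U.IsSymm := by
    unfold Matrix.IsSymm
    rw [hU, Matrix.transpose_smul, Matrix.transpose_add, Matrix.transpose_transpose, add_comm]
  -- tipR U agrees with tipR U0 on symmetric matrices
  have hagree : ∀ M : Matrix (Fin q) (Fin q) ℝ, M.IsSymm → tipR U M = tipR U0 M := by
    intro M hMsymm
    rw [hU, tipR_smul_left, tipR_add_left, tipR_transpose_left, hMsymm.eq]
    ring
  have hBsymm : ∀ j, (B j).IsSymm := by
    intro j
    refine Fin.cases ?_ ?_ j
    · simpa [hB] using hA0
    · intro l; simpa [hB] using hA l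
  have hvals : ∀ j, tipR U (B j) = b j := by
    intro j
    rw [hagree (B j) (hBsymm j)]
    exact congrFun (congrArg WithLp.ofLp hU0) j
  refine ⟨U, hUsymm, fun x => ?_⟩
  have hb0 : tipR U A0 = 0 := by
    have hv := hvals 0
    simp only [hB, Fin.cons_zero] at hv
    rw [hv, hb, EuclideanSpace.single_apply, if_neg (Ne.symm (Fin.succ_ne_zero i))]
  have hbl : ∀ l : Fin n, tipR U (A l) = if l = i then 1 else 0 := by
    intro l
    have hv := hvals l.succ
    simp only [hB, Fin.cons_succ] at hv
    rw [hv, hb, EuclideanSpace.single_apply]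
    by_cases hli : l = i
    · simp [hli]
    · simp [hli, Fin.succ_inj]
  rw [tipR_add_right, tipR_sum_right, hb0, zero_add]
  have hterm : ∀ l : Fin n, tipR U (x l • A l) = x l * (if l = i then 1 else 0) := by
    intro l; rw [tipR_smul_right, hbl l]
  rw [Finset.sum_congr rfl fun l _ => hterm l]
  simp

end
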